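/- Let u : ℝ → ℝ be a 2π-periodic continuously differentiable function, let ε > 0, and suppose z₁,…,z_n, w₁,…,w_n ∈ 𝔻 are such that |u′(θ) − ∑_{k=1}^{n} P(z_k, e^{iθ}) + ∑_{k=1}^{n} P(w_k, e^{iθ})| < ε for all θ ∈ ℝ. Then there exists σ ∈ 𝕋 such that, setting B(ζ) = σ ∏_{k=1}^{n} ((ζ − z_k)/(1 − conj(z_k) ζ)) · ((1 − conj(w_k) ζ)/(ζ − w_k)), there is a 2π-periodic continuously differentiable function v : ℝ → ℝ with e^{iv(θ)} = B(e^{iθ}) for all θ (a continuous branch of arg B) satisfying sup|u − v| + sup|u′ − v′| < (π + 1)ε. -/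

import Mathlib

open Complex MeasureTheory ComplexConjugate

/-- The Poisson kernel of the unit disk. -/
noncomputable def poissonK (z ζ : ℂ) : ℝ := (1 - ‖z‖ ^ 2) / ‖ζ - z‖ ^ 2

/-- Auxiliary: the Poisson kernel along the boundary circle. -/
noncomputable def pk' (z : ℂ) (θ : ℝ) : ℝ := poissonK z (Complex.exp (θ * Complex.I))

lemma norm_exp_I' (θ : ℝ) : ‖Complex.exp (θ * Complex.I)‖ = 1 := by
  simp [Complex.norm_exp_ofReal_mul_I]

lemma sub_ne' {z : ℂ} (hz : ‖z‖ < 1) (θ : ℝ) : Complex.exp (θ * Complex.I) - z ≠ 0 := by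
  intro h
  rw [sub_eq_zero] at h
  rw [← h, norm_exp_I'] at hz
  exact lt_irrefl _ hz

lemma one_sub_ne' {z : ℂ} (hz : ‖z‖ < 1) (θ : ℝ) :
    1 - conj z * Complex.exp (θ * Complex.I) ≠ 0 := by
  intro h
  rw [sub_eq_zero] at h
  have : ‖conj z * Complex.exp (θ * Complex.I)‖ = ‖z‖ := by
    rw [norm_mul, norm_exp_I', mul_one, RCLike.norm_conj]
  rw [← h, norm_one] at this
  rw [← this] at hz
  exact lt_irrefl _ hz

lemma one_sub_self_ne' {z : ℂ} (hz : ‖z‖ < 1) : (1 - z : ℂ) ≠ 0 := by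
  intro h
  rw [sub_eq_zero] at h
  rw [← h, norm_one] at hz
  exact lt_irrefl _ hz

lemma one_sub_conj_ne' {z : ℂ} (hz : ‖z‖ < 1) : (1 - conj z : ℂ) ≠ 0 := by
  have h := one_sub_self_ne' (z := conj z) (by rwa [RCLike.norm_conj])
  exact h

lemma pk_cont' {z : ℂ} (hz : ‖z‖ < 1) : Continuous (pk' z) := by
  unfold pk' poissonK
  apply continuous_const.div
  · fun_prop
  · intro θ
    exact pow_ne_zero 2 (norm_ne_zero_iff.mpr (sub_ne' hz θ))

lemma pk_periodic' (z : ℂ) : Function.Periodic (pk' z) (2 * Real.pi) := by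
  intro θ
  unfold pk' poissonK
  congr 2
  push_cast
  rw [add_mul, Complex.exp_add, Complex.exp_two_pi_mul_I, mul_one]

lemma exp_self_mul_conj (θ : ℝ) :
    Complex.exp (θ * Complex.I) * conj (Complex.exp (θ * Complex.I)) = 1 := by
  rw [Complex.mul_conj, Complex.normSq_eq_norm_sq]
  norm_cast
  rw [norm_exp_I']
  norm_num

lemma pk_complex' {z c : ℂ} (hc : c * conj c = 1) (hcz : c - z ≠ 0) :
    (((1 - ‖z‖^2)/‖c - z‖^2 : ℝ) : ℂ) = c/(c - z) + conj (z/(c - z)) := by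
  have h1 : ((‖z‖^2 : ℝ) : ℂ) = z * conj z := by
    rw [Complex.mul_conj, Complex.sq_norm]
  have h2 : ((‖c - z‖^2 : ℝ) : ℂ) = (c - z) * conj (c - z) := by
    rw [Complex.mul_conj, Complex.sq_norm]
  have hconj : conj c - conj z ≠ 0 :=
    sub_ne_zero_of_ne fun h => (sub_ne_zero.mp hcz) (star_injective h)
  rw [Complex.ofReal_div, Complex.ofReal_sub, Complex.ofReal_one, h1, h2, map_div₀]
  rw [map_sub]
  field_simp
  ring_nf
  linear_combination -hc

lemma blaschke_eq' {z : ℂ} (hz : ‖z‖ < 1) (θ : ℝ) :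
    Complex.exp (θ * Complex.I) - z =
      (1 - z)/(1 - conj z) * Complex.exp ((↑(∫ s in (0:ℝ)..θ, pk' z s)) * Complex.I) *
        (1 - conj z * Complex.exp (θ * Complex.I)) := by
  set vz : ℝ → ℝ := fun t => ∫ s in (0:ℝ)..t, pk' z s with hvzdef
  set g : ℝ → ℂ := fun t =>
    (Complex.exp (t * Complex.I) - z)/(1 - conj z * Complex.exp (t * Complex.I)) *
      Complex.exp (-(↑(vz t) * Complex.I)) with hgdef
  have hderiv : ∀ t : ℝ, HasDerivAt g 0 t := by
    intro t
    set c : ℂ := Complex.exp (t * Complex.I) with hcdef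
    have hE : HasDerivAt (fun t : ℝ => Complex.exp (↑t * I)) (c * I) t := by
      have h0 : HasDerivAt (fun t : ℝ => (↑t * I : ℂ)) I t := by
        simpa using ((hasDerivAt_id t).ofReal_comp.mul_const I)
      exact h0.cexp
    have hvz : HasDerivAt vz (pk' z t) t :=
      ((pk_cont' hz).integral_hasStrictDerivAt 0 t).hasDerivAt
    have hexp : HasDerivAt (fun s => Complex.exp (-(↑(vz s) * Complex.I)))
        (Complex.exp (-(↑(vz t) * Complex.I)) * (-(↑(pk' z t) * I))) t :=
      ((hvz.ofReal_comp.mul_const I).neg).cexp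
    have hD : HasDerivAt (fun s : ℝ => 1 - conj z * Complex.exp (↑s * I))
        (-(conj z * (c * I))) t := (hE.const_mul (conj z)).const_sub 1
    have hF := (hE.sub_const z).fun_div hD (one_sub_ne' hz t)
    have hg := hF.fun_mul hexp
    refine hg.congr_deriv (Eq.symm ?_)
    have hc : c * conj c = 1 := exp_self_mul_conj t
    have hc0 : c ≠ 0 := Complex.exp_ne_zero _
    have hcc : conj c = c⁻¹ := by
      field_simp
      linear_combination hc
    have hN : c - z ≠ 0 := sub_ne' hz t
    have hDne : 1 - conj z * c ≠ 0 := one_sub_ne' hz t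
    have hX : Complex.exp (-(↑(vz t) * Complex.I)) ≠ 0 := Complex.exp_ne_zero _
    have key : ((pk' z t : ℝ) : ℂ) = c/(c - z) + conj (z/(c - z)) := by
      unfold pk' poissonK
      exact pk_complex' hc hN
    rw [map_div₀, map_sub, hcc] at key
    have h5 : c⁻¹ - conj z ≠ 0 := by
      intro h
      apply hDne
      have := congrArg (fun x => c * x) h
      simp only [mul_sub, mul_inv_cancel₀ hc0, mul_zero] at this
      rw [← this]; ring
    simp only [← hcdef]
    rw [key]
    have hDne' : 1 - c * conj z ≠ 0 := by rw [mul_comm] at hDne; exact hDne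
    field_simp [hc0, hN, hDne, hDne', h5, hX]
    ring
  have hdiff : Differentiable ℝ g := fun t => (hderiv t).differentiableAt
  have hconst : g θ = g 0 :=
    is_const_of_deriv_eq_zero hdiff (fun t => (hderiv t).deriv) θ 0
  have h0 : g 0 = (1 - z)/(1 - conj z) := by
    simp [hgdef, hvzdef, intervalIntegral.integral_same]
  rw [h0] at hconst
  have hX : Complex.exp (-(↑(vz θ) * Complex.I)) ≠ 0 := Complex.exp_ne_zero _
  have hDne := one_sub_ne' hz θ
  have hne2 : (1 - conj z : ℂ) ≠ 0 := one_sub_conj_ne' hz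
  have key2 : Complex.exp ((↑(∫ s in (0:ℝ)..θ, pk' z s)) * Complex.I) =
      (Complex.exp (-(↑(vz θ) * Complex.I)))⁻¹ := by
    rw [← Complex.exp_neg, neg_neg]
  rw [key2]
  rw [← hconst]; simp only [hgdef]
  have hD2 : 1 - Complex.exp (θ * Complex.I) * conj z ≠ 0 := by rw [mul_comm]; exact hDne
  field_simp

lemma pk_integral' {z : ℂ} (hz : ‖z‖ < 1) :
    ∫ θ in (0:ℝ)..(2*Real.pi), pk' z θ = 2*Real.pi := by
  have hcontE : Continuous fun θ : ℝ => Complex.exp (θ * Complex.I) := by fun_prop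
  have hcont : Continuous fun θ : ℝ =>
      Complex.exp (θ * Complex.I) * (Complex.exp (θ * Complex.I) - z)⁻¹ := by
    apply hcontE.mul
    exact ((hcontE.sub continuous_const).inv₀ (fun θ => sub_ne' hz θ))
  have hmem : z ∈ Metric.ball (0:ℂ) 1 := by simpa using hz
  have h1 := circleIntegral.integral_sub_inv_of_mem_ball hmem
  rw [circleIntegral] at h1
  simp only [deriv_circleMap, circleMap, Complex.ofReal_one, one_mul, zero_add,
    smul_eq_mul] at h1
  have h1' : (I : ℂ) * ∫ θ in (0:ℝ)..(2*Real.pi),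
      Complex.exp (θ * Complex.I) * (Complex.exp (θ * Complex.I) - z)⁻¹ = 2*Real.pi*I := by
    rw [← intervalIntegral.integral_const_mul]
    rw [← h1]
    congr 1
    funext θ
    ring
  have h2 : ∫ θ in (0:ℝ)..(2*Real.pi),
      Complex.exp (θ * Complex.I) * (Complex.exp (θ * Complex.I) - z)⁻¹ = 2*Real.pi := by
    apply mul_left_cancel₀ Complex.I_ne_zero
    rw [h1']; ring
  set f : ℝ → ℂ := fun θ => 2 * (Complex.exp (θ * Complex.I) *
    (Complex.exp (θ * Complex.I) - z)⁻¹) - 1 with hfdef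
  have hfcont : Continuous f := by
    apply Continuous.sub _ continuous_const
    exact continuous_const.mul hcont
  have hfint : IntervalIntegrable f volume 0 (2*Real.pi) :=
    hfcont.intervalIntegrable _ _
  have hpt : ∀ θ : ℝ, pk' z θ = (f θ).re := by
    intro θ
    have hN := sub_ne' hz θ
    have key := pk_complex' (exp_self_mul_conj θ) hN
    have : pk' z θ = (((1 - ‖z‖^2)/‖Complex.exp (θ * Complex.I) - z‖^2 : ℝ) : ℂ).re := by
      rw [Complex.ofReal_re]; rfl
    rw [this, key]
    have hf : f θ = Complex.exp (θ * Complex.I)/(Complex.exp (θ * Complex.I) - z) +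
        z/(Complex.exp (θ * Complex.I) - z) := by
      rw [hfdef]
      field_simp
      ring
    rw [hf]
    simp only [Complex.add_re, Complex.conj_re]
  have hswap : ∫ θ in (0:ℝ)..(2*Real.pi), pk' z θ =
      (∫ θ in (0:ℝ)..(2*Real.pi), f θ).re := by
    have hcomm := Complex.reCLM.intervalIntegral_comp_comm hfint
    simp only [Complex.reCLM_apply] at hcomm
    rw [← hcomm]
    exact intervalIntegral.integral_congr (fun θ _ => hpt θ)
  rw [hswap, hfdef]
  rw [intervalIntegral.integral_sub ((continuous_const.fun_mul hcont).intervalIntegrable _ _)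
    (intervalIntegrable_const), intervalIntegral.integral_const_mul, h2,
    intervalIntegral.integral_const]
  simp
  ring

lemma norm_ratio' {z : ℂ} (hz : ‖z‖ < 1) : ‖(1 - z)/(1 - conj z)‖ = 1 := by
  rw [norm_div]
  have h : (1 - conj z : ℂ) = conj (1 - z) := by rw [map_sub, map_one]
  rw [h, RCLike.norm_conj]
  exact div_self (norm_ne_zero_iff.mpr (one_sub_self_ne' hz))

/-- if the derivative of a `2π`-periodic `C¹` function `u` is within
`ε` of a difference of Poisson kernel sums, then `u` is within `(π+1)ε` in the `C¹`
norm of a continuous branch of the argument of the corresponding Blaschke quotient. -/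
theorem quotient_blaschke_C1_approx
    (u : ℝ → ℝ) (hu_per : Function.Periodic u (2 * Real.pi)) (hu : ContDiff ℝ 1 u)
    (ε : ℝ) (hε : 0 < ε)
    (n : ℕ) (z w : Fin n → ℂ) (hz : ∀ k, ‖z k‖ < 1) (hw : ∀ k, ‖w k‖ < 1)
    (happrox : ∀ θ : ℝ,
      |deriv u θ - ∑ k, poissonK (z k) (Complex.exp (θ * Complex.I))
        + ∑ k, poissonK (w k) (Complex.exp (θ * Complex.I))| < ε) :
    ∃ σ : ℂ, ‖σ‖ = 1 ∧
      ∃ v : ℝ → ℝ, Function.Periodic v (2 * Real.pi) ∧ ContDiff ℝ 1 v ∧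
        (∀ θ : ℝ, Complex.exp (v θ * Complex.I) =
          σ * ∏ k, ((Complex.exp (θ * Complex.I) - z k) /
              (1 - conj (z k) * Complex.exp (θ * Complex.I))) *
            ((1 - conj (w k) * Complex.exp (θ * Complex.I)) /
              (Complex.exp (θ * Complex.I) - w k))) ∧
        ∃ a b : ℝ, a + b < (Real.pi + 1) * ε ∧
          (∀ θ : ℝ, |u θ - v θ| ≤ a) ∧ (∀ θ : ℝ, |deriv u θ - deriv v θ| ≤ b) := by
  have hπ : (0:ℝ) < 2 * Real.pi := by positivity
  -- the integrated Poisson kernels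
  set vz : ℂ → ℝ → ℝ := fun ζ t => ∫ s in (0:ℝ)..t, pk' ζ s with hvzdef
  have hvz_deriv : ∀ (ζ : ℂ), ‖ζ‖ < 1 → ∀ t, HasDerivAt (vz ζ) (pk' ζ t) t := fun ζ h t =>
    ((pk_cont' h).integral_hasStrictDerivAt 0 t).hasDerivAt
  have hvz_zero : ∀ ζ : ℂ, vz ζ 0 = 0 := fun ζ => intervalIntegral.integral_same
  have hvz_per : ∀ (ζ : ℂ), ‖ζ‖ < 1 → ∀ t, vz ζ (t + 2*Real.pi) = vz ζ t + 2*Real.pi := by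
    intro ζ h t
    have hint : ∀ a b : ℝ, IntervalIntegrable (pk' ζ) volume a b := fun a b =>
      (pk_cont' h).intervalIntegrable a b
    have h1 : vz ζ t + ∫ s in t..(t + 2*Real.pi), pk' ζ s = vz ζ (t + 2*Real.pi) :=
      intervalIntegral.integral_add_adjacent_intervals (hint 0 t) (hint t _)
    have h2 : (∫ s in t..(t + 2*Real.pi), pk' ζ s) = ∫ s in (0:ℝ)..(0 + 2*Real.pi), pk' ζ s :=
      (pk_periodic' ζ).intervalIntegral_add_eq t 0
    rw [zero_add] at h2
    rw [← h1, h2, pk_integral' h]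
  set p : ℝ → ℝ := fun t => (∑ k, pk' (z k) t) - ∑ k, pk' (w k) t with hpdef
  have hp_cont : Continuous p := by
    apply Continuous.sub <;> exact continuous_finset_sum _ (fun k _ => pk_cont' (by solve_by_elim))
  set v : ℝ → ℝ := fun t => u 0 + ((∑ k, vz (z k) t) - ∑ k, vz (w k) t) with hvdef
  have hv_deriv : ∀ t, HasDerivAt v (p t) t := by
    intro t
    apply HasDerivAt.const_add
    exact (HasDerivAt.fun_sum (fun k _ => hvz_deriv (z k) (hz k) t)).sub
      (HasDerivAt.fun_sum (fun k _ => hvz_deriv (w k) (hw k) t))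
  have hv_per : Function.Periodic v (2 * Real.pi) := by
    intro t
    simp only [hvdef]
    congr 1
    rw [Finset.sum_congr rfl (fun k _ => hvz_per (z k) (hz k) t),
        Finset.sum_congr rfl (fun k _ => hvz_per (w k) (hw k) t)]
    rw [Finset.sum_add_distrib, Finset.sum_add_distrib]
    ring
  have hv_cd : ContDiff ℝ 1 v := by
    rw [contDiff_one_iff_deriv]
    constructor
    · exact fun t => (hv_deriv t).differentiableAt
    · have : deriv v = p := funext fun t => (hv_deriv t).deriv
      rw [this]; exact hp_cont
  have hv_zero : v 0 = u 0 := by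
    simp [hvdef, hvz_zero]
  -- the branch property
  set az : Fin n → ℂ := fun k => (1 - z k)/(1 - conj (z k)) with hazdef
  set aw : Fin n → ℂ := fun k => (1 - w k)/(1 - conj (w k)) with hawdef
  have haz_ne : ∀ k, az k ≠ 0 := fun k =>
    div_ne_zero (one_sub_self_ne' (hz k)) (one_sub_conj_ne' (hz k))
  have haw_ne : ∀ k, aw k ≠ 0 := fun k =>
    div_ne_zero (one_sub_self_ne' (hw k)) (one_sub_conj_ne' (hw k))
  set σ : ℂ := Complex.exp (↑(u 0) * Complex.I) * (∏ k, az k * (aw k)⁻¹)⁻¹ with hσdef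
  have hσnorm : ‖σ‖ = 1 := by
    rw [hσdef, norm_mul, norm_inv, norm_prod]
    have : ∀ k ∈ Finset.univ, ‖az k * (aw k)⁻¹‖ = 1 := by
      intro k _
      rw [norm_mul, norm_inv, hazdef, hawdef, norm_ratio' (hz k), norm_ratio' (hw k)]
      norm_num
    rw [Finset.prod_congr rfl this]
    simp [Complex.norm_exp_ofReal_mul_I]
  have hbranch : ∀ θ : ℝ, Complex.exp (↑(v θ) * Complex.I) =
      σ * ∏ k, ((Complex.exp (θ * Complex.I) - z k) /
          (1 - conj (z k) * Complex.exp (θ * Complex.I))) *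
        ((1 - conj (w k) * Complex.exp (θ * Complex.I)) /
          (Complex.exp (θ * Complex.I) - w k)) := by
    intro θ
    have hbr : ∀ (ζ : ℂ), ‖ζ‖ < 1 →
        (Complex.exp (θ * Complex.I) - ζ)/(1 - conj ζ * Complex.exp (θ * Complex.I)) =
          (1 - ζ)/(1 - conj ζ) * Complex.exp (↑(vz ζ θ) * Complex.I) := by
      intro ζ h
      rw [div_eq_iff (one_sub_ne' h θ)]
      exact blaschke_eq' h θ
    have hfac : ∀ k : Fin n, ((Complex.exp (θ * Complex.I) - z k) /
          (1 - conj (z k) * Complex.exp (θ * Complex.I))) *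
        ((1 - conj (w k) * Complex.exp (θ * Complex.I)) /
          (Complex.exp (θ * Complex.I) - w k)) =
        (az k * (aw k)⁻¹) * (Complex.exp (↑(vz (z k) θ) * Complex.I) *
          (Complex.exp (↑(vz (w k) θ) * Complex.I))⁻¹) := by
      intro k
      have h1 : (1 - conj (w k) * Complex.exp (θ * Complex.I)) /
          (Complex.exp (θ * Complex.I) - w k) =
          ((Complex.exp (θ * Complex.I) - w k) /
            (1 - conj (w k) * Complex.exp (θ * Complex.I)))⁻¹ := (inv_div _ _).symm
      rw [h1, hbr (z k) (hz k), hbr (w k) (hw k), mul_inv]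
      ring
    rw [Finset.prod_congr rfl (fun k _ => hfac k), Finset.prod_mul_distrib]
    have hL : Complex.exp (↑(v θ) * Complex.I) = Complex.exp (↑(u 0) * Complex.I) *
        ((∏ k, Complex.exp (↑(vz (z k) θ) * Complex.I)) *
          (∏ k, Complex.exp (↑(vz (w k) θ) * Complex.I))⁻¹) := by
      have harg : (↑(v θ) * Complex.I : ℂ) = ↑(u 0) * Complex.I +
          ((∑ k, ↑(vz (z k) θ) * Complex.I) - ∑ k, ↑(vz (w k) θ) * Complex.I) := by
        simp only [hvdef]
        push_cast
        rw [← Finset.sum_mul, ← Finset.sum_mul]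
        ring
      rw [harg, Complex.exp_add, Complex.exp_sub, Complex.exp_sum, Complex.exp_sum,
        div_eq_mul_inv]
    have hprod_ne : (∏ k, az k * (aw k)⁻¹) ≠ 0 :=
      Finset.prod_ne_zero_iff.mpr (fun k _ => mul_ne_zero (haz_ne k) (inv_ne_zero (haw_ne k)))
    rw [hL, hσdef]
    have hQ : (∏ k, (Complex.exp (↑(vz (z k) θ) * Complex.I) *
        (Complex.exp (↑(vz (w k) θ) * Complex.I))⁻¹)) =
        (∏ k, Complex.exp (↑(vz (z k) θ) * Complex.I)) *
          (∏ k, Complex.exp (↑(vz (w k) θ) * Complex.I))⁻¹ := by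
      rw [Finset.prod_mul_distrib, Finset.prod_inv_distrib]
    rw [hQ, mul_assoc, inv_mul_cancel_left₀ hprod_ne]
  -- the bounds
  have hu_diff : Differentiable ℝ u := (contDiff_one_iff_deriv.mp hu).1
  have hu'_cont : Continuous (deriv u) := (contDiff_one_iff_deriv.mp hu).2
  have hu'_per : Function.Periodic (deriv u) (2 * Real.pi) := by
    intro t
    have h1 : deriv (fun x : ℝ => u (x + 2*Real.pi)) t = deriv u (t + 2*Real.pi) :=
      deriv_comp_add_const u (2*Real.pi) t
    rw [← h1]
    congr 1
    exact funext (fun x => hu_per x)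
  have hp_per : Function.Periodic p (2 * Real.pi) := by
    intro t
    simp only [hpdef]
    rw [Finset.sum_congr rfl (fun k _ => pk_periodic' (z k) t),
        Finset.sum_congr rfl (fun k _ => pk_periodic' (w k) t)]
  set q : ℝ → ℝ := fun t => |deriv u t - p t| with hqdef
  have hq_cont : Continuous q := (hu'_cont.sub hp_cont).abs
  have hq_per : Function.Periodic q (2 * Real.pi) := by
    intro t
    simp only [hqdef, hu'_per t, hp_per t]
  obtain ⟨θ₀, hθ₀mem, hmax⟩ := isCompact_Icc.exists_isMaxOn
    (Set.nonempty_Icc.mpr (by linarith)) (hq_cont.continuousOn (s := Set.Icc 0 (2*Real.pi)))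
  set b : ℝ := q θ₀ with hbdef
  have hb_nonneg : 0 ≤ b := abs_nonneg _
  have hb : b < ε := by
    have := happrox θ₀
    have heq : deriv u θ₀ - p θ₀ = deriv u θ₀ -
        ∑ k, poissonK (z k) (Complex.exp (θ₀ * Complex.I))
        + ∑ k, poissonK (w k) (Complex.exp (θ₀ * Complex.I)) := by
      simp only [hpdef, pk']
      ring
    rw [hbdef, hqdef]
    simp only [heq]
    exact this
  have hqb : ∀ t, q t ≤ b := by
    intro t
    obtain ⟨y, hy, hqy⟩ := hq_per.exists_mem_Ico₀ hπ t
    rw [hqy]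
    exact hmax ⟨hy.1, hy.2.le⟩
  -- the C⁰ bound
  set g : ℝ → ℝ := fun t => u t - v t with hgdef
  have hg_per : Function.Periodic g (2 * Real.pi) := by
    intro t
    simp only [hgdef, hu_per t, hv_per t]
  have hg_zero : g 0 = 0 := by simp [hgdef, hv_zero]
  have hg_lip : ∀ x y : ℝ, |g y - g x| ≤ b * |y - x| := by
    intro x y
    have := Convex.norm_image_sub_le_of_norm_hasDerivWithin_le
      (f := g) (f' := fun t => deriv u t - p t) (s := Set.univ) (C := b)
      (fun t _ => (((hu_diff t).hasDerivAt).sub (hv_deriv t)).hasDerivWithinAt)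
      (fun t _ => by rw [Real.norm_eq_abs]; exact hqb t)
      convex_univ (Set.mem_univ x) (Set.mem_univ y)
    simpa [Real.norm_eq_abs] using this
  have hg_bound : ∀ t, |g t| ≤ Real.pi * b := by
    intro t
    obtain ⟨y, hy, hgy⟩ := hg_per.exists_mem_Ico₀ hπ t
    rw [hgy]
    rcases le_or_gt y Real.pi with hc | hc
    · have := hg_lip 0 y
      rw [hg_zero, sub_zero, sub_zero] at this
      calc |g y| ≤ b * |y| := this
        _ ≤ b * Real.pi := by
            apply mul_le_mul_of_nonneg_left _ hb_nonneg
            rw [_root_.abs_of_nonneg hy.1]; exact hc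
        _ = Real.pi * b := mul_comm _ _
    · have h2π : g (2 * Real.pi) = 0 := by
        have := hg_per 0
        rw [zero_add] at this
        rw [this, hg_zero]
      have := hg_lip (2 * Real.pi) y
      rw [h2π, sub_zero] at this
      calc |g y| ≤ b * |y - 2 * Real.pi| := this
        _ ≤ b * Real.pi := by
            apply mul_le_mul_of_nonneg_left _ hb_nonneg
            rw [_root_.abs_of_nonpos (by linarith [hy.2])]
            have : Real.pi < y := hc
            linarith [hy.2]
        _ = Real.pi * b := mul_comm _ _
  refine ⟨σ, hσnorm, v, hv_per, hv_cd, hbranch, Real.pi * b, b, ?_, hg_bound, ?_⟩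
  · have hπ1 : (0:ℝ) < Real.pi + 1 := by linarith [Real.pi_pos]
    calc Real.pi * b + b = (Real.pi + 1) * b := by ring
      _ < (Real.pi + 1) * ε := by exact mul_lt_mul_of_pos_left hb hπ1
  · intro θ
    rw [(hv_deriv θ).deriv]
    exact hqb θ
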